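/- (Asymptotic mmW UDN spectral efficiency, Theorem 2.) Fix reals α > 2, K > 0, ρ' ≥ 0, c₁ ≥ c₂ > 0 and L₀ > 1. For i = 1, 2 define f_i(L) := ∫₀^∞ (1 − e^{−K·(1 + (ρ'/L)·(e^t − 1)^{2/α})}) · max(0, 1 − (c_i/L)·(e^t − 1)^{2/α}) dt. If γ : ℝ → ℝ satisfies f₁(L) ≤ γ(L) ≤ f₂(L) for all L ≥ L₀, then γ(L)/log L → (α/2)·(1 − e^{−K}) as L → ∞; that is, γ(L) is asymptotically equal to (α/2)·(1 − e^{−K})·log L. -/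

import Mathlib

open Real Filter MeasureTheory

/-- ratio of `log (1 + (L / b L) ^ p)` to `log L` tends to `p`. -/
lemma aux_logratio (p : ℝ) (hp : 0 < p) (b : ℝ → ℝ)
    (hb : Tendsto (fun L => Real.log (b L) / Real.log L) atTop (nhds 0))
    (hbpos : ∀ᶠ L in atTop, 0 < b L) :
    Tendsto (fun L => Real.log (1 + (L / b L) ^ p) / Real.log L) atTop (nhds p) := by
  have hloginv : Tendsto (fun L : ℝ => 1 / Real.log L) atTop (nhds 0) := by
    exact Real.tendsto_log_atTop.inv_tendsto_atTop.congr (fun L => by simp [one_div])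
  have hg : Tendsto (fun L => p * (1 - Real.log (b L) / Real.log L)) atTop (nhds p) := by
    have := ((tendsto_const_nhds (x := (1:ℝ)) (f := atTop)).sub hb).const_mul p
    simpa using this
  have hh : Tendsto
      (fun L => p * (1 - Real.log (b L) / Real.log L) + Real.log 2 * (1 / Real.log L))
      atTop (nhds p) := by
    simpa using hg.add (hloginv.const_mul (Real.log 2))
  apply tendsto_of_tendsto_of_tendsto_of_le_of_le' hg hh
  · filter_upwards [eventually_ge_atTop (Real.exp 1), hbpos,
      hb.eventually (eventually_le_nhds (by norm_num : (0:ℝ) < 1/2))] with L hLe hbp hhalf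
    have hL0 : 0 < L := (Real.exp_pos 1).trans_le hLe
    have hlog1 : 1 ≤ Real.log L := by
      have := Real.log_le_log (Real.exp_pos 1) hLe
      simpa using this
    have hlogpos : 0 < Real.log L := lt_of_lt_of_le one_pos hlog1
    have hlogb : Real.log (b L) ≤ Real.log L / 2 := by
      have := (div_le_iff₀ hlogpos).1 hhalf
      linarith
    have hble : b L ≤ L := by
      have h := Real.exp_le_exp.2 (show Real.log (b L) ≤ Real.log L by linarith)
      rwa [Real.exp_log hbp, Real.exp_log hL0] at h
    have hdivpos : 0 < L / b L := div_pos hL0 hbp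
    have hy1 : 1 ≤ (L / b L) ^ p := Real.one_le_rpow ((one_le_div hbp).2 hble) hp.le
    have hlb : p * (Real.log L - Real.log (b L)) ≤ Real.log (1 + (L / b L) ^ p) := by
      have h1 : Real.log ((L / b L) ^ p) ≤ Real.log (1 + (L / b L) ^ p) :=
        Real.log_le_log (Real.rpow_pos_of_pos hdivpos p) (by linarith)
      rw [Real.log_rpow hdivpos, Real.log_div hL0.ne' hbp.ne'] at h1
      exact h1
    have := (div_le_div_iff_of_pos_right hlogpos).2 hlb
    calc p * (1 - Real.log (b L) / Real.log L)
        = p * (Real.log L - Real.log (b L)) / Real.log L := by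
          rw [mul_div_assoc, sub_div, div_self hlogpos.ne']
      _ ≤ _ := this
  · filter_upwards [eventually_ge_atTop (Real.exp 1), hbpos,
      hb.eventually (eventually_le_nhds (by norm_num : (0:ℝ) < 1/2))] with L hLe hbp hhalf
    have hL0 : 0 < L := (Real.exp_pos 1).trans_le hLe
    have hlog1 : 1 ≤ Real.log L := by
      have := Real.log_le_log (Real.exp_pos 1) hLe
      simpa using this
    have hlogpos : 0 < Real.log L := lt_of_lt_of_le one_pos hlog1
    have hlogb : Real.log (b L) ≤ Real.log L / 2 := by
      have := (div_le_iff₀ hlogpos).1 hhalf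
      linarith
    have hble : b L ≤ L := by
      have h := Real.exp_le_exp.2 (show Real.log (b L) ≤ Real.log L by linarith)
      rwa [Real.exp_log hbp, Real.exp_log hL0] at h
    have hdivpos : 0 < L / b L := div_pos hL0 hbp
    have hy1 : 1 ≤ (L / b L) ^ p := Real.one_le_rpow ((one_le_div hbp).2 hble) hp.le
    have hub : Real.log (1 + (L / b L) ^ p)
        ≤ Real.log 2 + p * (Real.log L - Real.log (b L)) := by
      have h1 : Real.log (1 + (L / b L) ^ p) ≤ Real.log (2 * (L / b L) ^ p) :=
        Real.log_le_log (by linarith) (by linarith)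
      rw [Real.log_mul (by norm_num) (Real.rpow_pos_of_pos hdivpos p).ne',
        Real.log_rpow hdivpos, Real.log_div hL0.ne' hbp.ne'] at h1
      exact h1
    have := (div_le_div_iff_of_pos_right hlogpos).2 hub
    calc Real.log (1 + (L / b L) ^ p) / Real.log L
        ≤ (Real.log 2 + p * (Real.log L - Real.log (b L))) / Real.log L := this
      _ = p * (1 - Real.log (b L) / Real.log L) + Real.log 2 * (1 / Real.log L) := by
          rw [add_div, mul_div_assoc, sub_div, div_self hlogpos.ne', mul_one_div]
          ring

/-- continuity of the sandwich integrand. -/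
lemma aux_cont (K ρ' c L q : ℝ) (hq : 0 ≤ q) :
    Continuous (fun t : ℝ =>
      (1 - Real.exp (-(K * (1 + (ρ' / L) * (Real.exp t - 1) ^ q)))) *
        max 0 (1 - (c / L) * (Real.exp t - 1) ^ q)) := by
  have h1 : Continuous (fun t : ℝ => (Real.exp t - 1) ^ q) := by
    have hrc : Continuous fun x : ℝ => x ^ q :=
      continuous_iff_continuousAt.2 fun x => Real.continuousAt_rpow_const x q (Or.inr hq)
    exact hrc.comp (Real.continuous_exp.sub continuous_const)
  have h2 : Continuous fun t : ℝ =>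
      1 - Real.exp (-(K * (1 + (ρ' / L) * (Real.exp t - 1) ^ q))) :=
    continuous_const.sub (Real.continuous_exp.comp
      ((continuous_const.mul (continuous_const.add (continuous_const.mul h1))).neg))
  exact h2.mul (continuous_const.max (continuous_const.sub (continuous_const.mul h1)))

/-- the integrand vanishes beyond `T = log (1 + (L/c)^p)`. -/
lemma aux_zero (K ρ' c L p q : ℝ) (hc : 0 < c) (hL : 0 < L) (hq : 0 ≤ q)
    (hpq : p * q = 1) {t : ℝ} (ht : Real.log (1 + (L / c) ^ p) ≤ t) :
    (1 - Real.exp (-(K * (1 + (ρ' / L) * (Real.exp t - 1) ^ q)))) *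
      max 0 (1 - (c / L) * (Real.exp t - 1) ^ q) = 0 := by
  have hLc : 0 < (L / c) ^ p := Real.rpow_pos_of_pos (div_pos hL hc) p
  have hx : (L / c : ℝ) ≤ (Real.exp t - 1) ^ q := by
    have h1 : (1 : ℝ) + (L / c) ^ p ≤ Real.exp t := by
      rw [← Real.exp_log (by linarith : (0:ℝ) < 1 + (L / c) ^ p)]
      exact Real.exp_le_exp.2 ht
    have h2 : ((L / c) ^ p : ℝ) ≤ Real.exp t - 1 := by linarith
    have h3 := Real.rpow_le_rpow hLc.le h2 hq
    rwa [← Real.rpow_mul (div_pos hL hc).le, hpq, Real.rpow_one] at h3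
  have : 1 - (c / L) * (Real.exp t - 1) ^ q ≤ 0 := by
    have : (1 : ℝ) ≤ (c / L) * (Real.exp t - 1) ^ q := by
      have := mul_le_mul_of_nonneg_left hx (le_of_lt (div_pos hc hL))
      rwa [div_mul_div_comm, mul_comm c L, div_self (by positivity)] at this
    linarith
  rw [max_eq_left this, mul_zero]

/-- integrability of the sandwich integrand on `(0, ∞)`. -/
lemma aux_integrable (K ρ' c L p q : ℝ) (hc : 0 < c) (hL : 0 < L)
    (hq : 0 ≤ q) (hpq : p * q = 1) :
    IntegrableOn (fun t : ℝ =>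
      (1 - Real.exp (-(K * (1 + (ρ' / L) * (Real.exp t - 1) ^ q)))) *
        max 0 (1 - (c / L) * (Real.exp t - 1) ^ q)) (Set.Ioi 0) := by
  set T := Real.log (1 + (L / c) ^ p) with hT
  have hT0 : 0 ≤ T :=
    Real.log_nonneg (by nlinarith [Real.rpow_pos_of_pos (div_pos hL hc) p])
  rw [← Set.Ioc_union_Ioi_eq_Ioi hT0]
  apply MeasureTheory.IntegrableOn.union
  · exact (aux_cont K ρ' c L q hq).integrableOn_Ioc
  · exact (integrableOn_congr_fun (g := fun _ : ℝ => (0:ℝ))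
      (fun t ht => aux_zero K ρ' c L p q hc hL hq hpq (le_of_lt ht)) measurableSet_Ioi).2
      integrableOn_zero

set_option maxHeartbeats 1000000 in
/-- Theorem 2 (asymptotic mmW UDN spectral efficiency). With `α > 2`, `K > 0`, `ρ' ≥ 0`,
`c₁ ≥ c₂ > 0`, `L₀ > 1`, if `γ` is sandwiched for all `L ≥ L₀` between
`f_i(L) := ∫₀^∞ (1 − e^{−K(1 + (ρ'/L)(e^t − 1)^{2/α})}) · max(0, 1 − (c_i/L)(e^t − 1)^{2/α}) dt`,
`i = 1, 2`, then `γ(L)/log L → (α/2)(1 − e^{−K})` as `L → ∞`. -/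
theorem stmt_11 (α K ρ' c₁ c₂ L₀ : ℝ) (hα : 2 < α) (hK : 0 < K) (hρ' : 0 ≤ ρ')
    (hc₂ : 0 < c₂) (hc₁₂ : c₂ ≤ c₁) (hL₀ : 1 < L₀) (γ : ℝ → ℝ)
    (hγ : ∀ L, L₀ ≤ L →
      (∫ t in Set.Ioi (0:ℝ),
          (1 - Real.exp (-(K * (1 + (ρ' / L) * (Real.exp t - 1) ^ (2 / α))))) *
            max 0 (1 - (c₁ / L) * (Real.exp t - 1) ^ (2 / α))) ≤ γ L ∧
      γ L ≤ ∫ t in Set.Ioi (0:ℝ),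
          (1 - Real.exp (-(K * (1 + (ρ' / L) * (Real.exp t - 1) ^ (2 / α))))) *
            max 0 (1 - (c₂ / L) * (Real.exp t - 1) ^ (2 / α))) :
    Tendsto (fun L => γ L / Real.log L) atTop (nhds ((α / 2) * (1 - Real.exp (-K)))) := by
  have hα0 : 0 < α := by linarith
  set q : ℝ := 2 / α with hqdef
  set p : ℝ := α / 2 with hpdef
  have hq : 0 < q := by positivity
  have hp0 : 0 < p := by positivity
  have hpq : p * q = 1 := by
    rw [hpdef, hqdef]; field_simp
  have hc₁ : 0 < c₁ := lt_of_lt_of_le hc₂ hc₁₂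
  have hEK : 0 < 1 - Real.exp (-K) := by
    have : Real.exp (-K) < 1 := Real.exp_lt_one_iff.2 (by linarith)
    linarith
  set C₀ : ℝ := K * ρ' * p * 2 ^ q / c₂ with hC₀
  set l : ℝ → ℝ := fun L =>
    (1 - Real.exp (-K)) * (1 - 1 / Real.log L) *
      Real.log (1 + (L / (c₁ * Real.log L)) ^ p) with hl
  set u : ℝ → ℝ := fun L =>
    (1 - Real.exp (-K)) * Real.log (1 + (L / c₂) ^ p) + C₀ with hu
  have hloginv : Tendsto (fun L : ℝ => 1 / Real.log L) atTop (nhds 0) := by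
    exact Real.tendsto_log_atTop.inv_tendsto_atTop.congr (fun L => by simp [one_div])
  -- limit of u / log
  have hratio2 : Tendsto (fun L => Real.log (1 + (L / c₂) ^ p) / Real.log L)
      atTop (nhds p) := by
    refine aux_logratio p hp0 (fun _ => c₂) ?_ (Eventually.of_forall fun _ => hc₂)
    simpa using (tendsto_const_nhds (x := Real.log c₂)).div_atTop Real.tendsto_log_atTop
  have hub_lim : Tendsto (fun L => u L / Real.log L) atTop
      (nhds ((α / 2) * (1 - Real.exp (-K)))) := by
    have h := (hratio2.const_mul (1 - Real.exp (-K))).add (hloginv.const_mul C₀)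
    have heq : ((1 - Real.exp (-K)) * p + C₀ * 0) = (α / 2) * (1 - Real.exp (-K)) := by
      rw [hpdef]; ring
    rw [heq] at h
    refine h.congr fun L => ?_
    rw [hu]
    rw [add_div, mul_div_assoc, mul_one_div]
  -- limit of l / log
  have hratio1 : Tendsto
      (fun L => Real.log (1 + (L / (c₁ * Real.log L)) ^ p) / Real.log L)
      atTop (nhds p) := by
    refine aux_logratio p hp0 (fun L => c₁ * Real.log L) ?_ ?_
    · have hll : Tendsto (fun L : ℝ => Real.log (Real.log L) / Real.log L) atTop (nhds 0) := by
        have h0 : Tendsto (fun x : ℝ => Real.log x / x) atTop (nhds 0) :=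
          Real.isLittleO_log_id_atTop.tendsto_div_nhds_zero
        exact h0.comp Real.tendsto_log_atTop
      have hlc : Tendsto (fun L : ℝ => Real.log c₁ / Real.log L) atTop (nhds 0) :=
        tendsto_const_nhds.div_atTop Real.tendsto_log_atTop
      have h := hlc.add hll
      rw [add_zero] at h
      refine h.congr' ?_
      filter_upwards [eventually_ge_atTop (Real.exp 1)] with L hLe
      have hL0 : 0 < L := (Real.exp_pos 1).trans_le hLe
      have hlog1 : 1 ≤ Real.log L := by
        have := Real.log_le_log (Real.exp_pos 1) hLe
        simpa using this
      rw [Real.log_mul hc₁.ne' (by linarith), add_div]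
    · filter_upwards [eventually_ge_atTop (Real.exp 1)] with L hLe
      have hlog1 : 1 ≤ Real.log L := by
        have := Real.log_le_log (Real.exp_pos 1) hLe
        simpa using this
      positivity
  have hlb_lim : Tendsto (fun L => l L / Real.log L) atTop
      (nhds ((α / 2) * (1 - Real.exp (-K)))) := by
    have h := ((tendsto_const_nhds (x := (1:ℝ)) (f := atTop)).sub hloginv).mul hratio1
    have h2 := h.const_mul (1 - Real.exp (-K))
    have heq : (1 - Real.exp (-K)) * ((1 - 0) * p) = (α / 2) * (1 - Real.exp (-K)) := by
      rw [hpdef]; ring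
    rw [heq] at h2
    refine h2.congr fun L => ?_
    rw [hl]
    ring
  -- eventual sandwich
  have key : ∀ᶠ L in atTop, l L ≤ γ L ∧ γ L ≤ u L := by
    filter_upwards [eventually_ge_atTop L₀, eventually_ge_atTop c₂,
      eventually_ge_atTop (Real.exp 1)] with L hLL₀ hLc₂ hLe
    have hL0 : 0 < L := (Real.exp_pos 1).trans_le hLe
    have hlog1 : 1 ≤ Real.log L := by
      have := Real.log_le_log (Real.exp_pos 1) hLe
      simpa using this
    have hlogpos : 0 < Real.log L := lt_of_lt_of_le one_pos hlog1
    obtain ⟨hlow, hupp⟩ := hγ L hLL₀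
    have hxnn : ∀ t : ℝ, 0 < t → (0:ℝ) ≤ (Real.exp t - 1) ^ q := fun t ht =>
      Real.rpow_nonneg (by nlinarith [Real.one_le_exp (le_of_lt ht)]) q
    constructor
    · -- lower bound : l L ≤ ∫ f₁ ≤ γ L
      set τ := Real.log (1 + (L / (c₁ * Real.log L)) ^ p) with hτ
      have hBpos : 0 < c₁ * Real.log L := by positivity
      have hdpos : 0 < L / (c₁ * Real.log L) := div_pos hL0 hBpos
      have hdp : 0 < (L / (c₁ * Real.log L)) ^ p := Real.rpow_pos_of_pos hdpos p
      have hτ0 : 0 ≤ τ := Real.log_nonneg (by linarith)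
      have hint1 : IntegrableOn (fun t : ℝ =>
          (1 - Real.exp (-(K * (1 + (ρ' / L) * (Real.exp t - 1) ^ q)))) *
            max 0 (1 - (c₁ / L) * (Real.exp t - 1) ^ q)) (Set.Ioi 0) :=
        aux_integrable K ρ' c₁ L p q hc₁ hL0 hq.le hpq
      have hstep1 : (∫ t in Set.Ioc (0:ℝ) τ,
          (1 - Real.exp (-(K * (1 + (ρ' / L) * (Real.exp t - 1) ^ q)))) *
            max 0 (1 - (c₁ / L) * (Real.exp t - 1) ^ q)) ≤
          ∫ t in Set.Ioi (0:ℝ),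
          (1 - Real.exp (-(K * (1 + (ρ' / L) * (Real.exp t - 1) ^ q)))) *
            max 0 (1 - (c₁ / L) * (Real.exp t - 1) ^ q) := by
        refine setIntegral_mono_set hint1 ?_
          (HasSubset.Subset.eventuallyLE Set.Ioc_subset_Ioi_self)
        refine (ae_restrict_iff' measurableSet_Ioi).2 (Eventually.of_forall fun t ht => ?_)
        have h1 : Real.exp (-(K * (1 + (ρ' / L) * (Real.exp t - 1) ^ q))) ≤ 1 := by
          apply Real.exp_le_one_iff.2
          have := hxnn t ht
          have : 0 ≤ (ρ' / L) * (Real.exp t - 1) ^ q := by positivity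
          nlinarith
        exact mul_nonneg (by linarith) (le_max_left _ _)
      have hstep2 : ((1 - Real.exp (-K)) * (1 - 1 / Real.log L)) * τ ≤
          ∫ t in Set.Ioc (0:ℝ) τ,
          (1 - Real.exp (-(K * (1 + (ρ' / L) * (Real.exp t - 1) ^ q)))) *
            max 0 (1 - (c₁ / L) * (Real.exp t - 1) ^ q) := by
        have hconst : (∫ _ in Set.Ioc (0:ℝ) τ,
            ((1 - Real.exp (-K)) * (1 - 1 / Real.log L))) =
            ((1 - Real.exp (-K)) * (1 - 1 / Real.log L)) * τ := by
          rw [setIntegral_const, measureReal_def, Real.volume_Ioc, smul_eq_mul,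
            ENNReal.toReal_ofReal (by linarith)]
          ring
        rw [← hconst]
        refine setIntegral_mono_on (integrableOn_const ?_)
          (hint1.mono_set Set.Ioc_subset_Ioi_self) measurableSet_Ioc fun t ht => ?_
        · rw [Real.volume_Ioc]; exact ENNReal.ofReal_ne_top
        · obtain ⟨ht0, htτ⟩ := ht
          have hx := hxnn t ht0
          -- x t ≤ L / (c₁ log L)
          have hxle : (Real.exp t - 1) ^ q ≤ L / (c₁ * Real.log L) := by
            have h1 : Real.exp t ≤ 1 + (L / (c₁ * Real.log L)) ^ p := by
              rw [← Real.exp_log (by linarith : (0:ℝ) < 1 + (L / (c₁ * Real.log L)) ^ p)]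
              exact Real.exp_le_exp.2 htτ
            have h2 : Real.exp t - 1 ≤ (L / (c₁ * Real.log L)) ^ p := by linarith
            have h3 := Real.rpow_le_rpow (by nlinarith [Real.one_le_exp ht0.le])
              h2 hq.le
            rwa [← Real.rpow_mul hdpos.le, hpq, Real.rpow_one] at h3
          have hB : 1 - 1 / Real.log L ≤ max 0 (1 - (c₁ / L) * (Real.exp t - 1) ^ q) := by
            refine le_trans ?_ (le_max_right _ _)
            have : (c₁ / L) * (Real.exp t - 1) ^ q ≤ 1 / Real.log L := by
              have := mul_le_mul_of_nonneg_left hxle (le_of_lt (div_pos hc₁ hL0))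
              calc (c₁ / L) * (Real.exp t - 1) ^ q
                  ≤ (c₁ / L) * (L / (c₁ * Real.log L)) := this
                _ = 1 / Real.log L := by field_simp
            linarith
          have hA : 1 - Real.exp (-K) ≤
              1 - Real.exp (-(K * (1 + (ρ' / L) * (Real.exp t - 1) ^ q))) := by
            have hynn : 0 ≤ (ρ' / L) * (Real.exp t - 1) ^ q := by positivity
            have : Real.exp (-(K * (1 + (ρ' / L) * (Real.exp t - 1) ^ q)))
                ≤ Real.exp (-K) := Real.exp_le_exp.2 (by nlinarith)
            linarith
          have hBnn : (0:ℝ) ≤ 1 - 1 / Real.log L := by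
            have : 1 / Real.log L ≤ 1 := by
              rw [div_le_one hlogpos]; exact hlog1
            linarith
          exact mul_le_mul hA hB hBnn (by linarith)
      calc l L = ((1 - Real.exp (-K)) * (1 - 1 / Real.log L)) * τ := by rw [hl]
        _ ≤ _ := le_trans hstep2 (le_trans hstep1 hlow)
    · -- upper bound : γ L ≤ ∫ f₂ ≤ u L
      set T := Real.log (1 + (L / c₂) ^ p) with hTdef
      have hdpos : 0 < L / c₂ := div_pos hL0 hc₂
      have hdp : 0 < (L / c₂) ^ p := Real.rpow_pos_of_pos hdpos p
      have hT0 : 0 ≤ T := Real.log_nonneg (by linarith)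
      have hint2 : IntegrableOn (fun t : ℝ =>
          (1 - Real.exp (-(K * (1 + (ρ' / L) * (Real.exp t - 1) ^ q)))) *
            max 0 (1 - (c₂ / L) * (Real.exp t - 1) ^ q)) (Set.Ioi 0) :=
        aux_integrable K ρ' c₂ L p q hc₂ hL0 hq.le hpq
      -- split the integral
      have hi1 : IntegrableOn (fun t : ℝ =>
          (1 - Real.exp (-(K * (1 + (ρ' / L) * (Real.exp t - 1) ^ q)))) *
            max 0 (1 - (c₂ / L) * (Real.exp t - 1) ^ q)) (Set.Ioc (0:ℝ) T) :=
        hint2.mono_set Set.Ioc_subset_Ioi_self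
      have hi2 : IntegrableOn (fun t : ℝ =>
          (1 - Real.exp (-(K * (1 + (ρ' / L) * (Real.exp t - 1) ^ q)))) *
            max 0 (1 - (c₂ / L) * (Real.exp t - 1) ^ q)) (Set.Ioi T) :=
        (integrableOn_congr_fun (g := fun _ : ℝ => (0:ℝ))
          (fun t ht => aux_zero K ρ' c₂ L p q hc₂ hL0 hq.le hpq (le_of_lt ht))
          measurableSet_Ioi).2 integrableOn_zero
      have hsplit : (∫ t in Set.Ioi (0:ℝ),
          (1 - Real.exp (-(K * (1 + (ρ' / L) * (Real.exp t - 1) ^ q)))) *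
            max 0 (1 - (c₂ / L) * (Real.exp t - 1) ^ q)) =
          ∫ t in Set.Ioc (0:ℝ) T,
          (1 - Real.exp (-(K * (1 + (ρ' / L) * (Real.exp t - 1) ^ q)))) *
            max 0 (1 - (c₂ / L) * (Real.exp t - 1) ^ q) := by
        have hunion := setIntegral_union (μ := volume)
          (s := Set.Ioc (0:ℝ) T) (t := Set.Ioi T)
          (f := fun t : ℝ =>
            (1 - Real.exp (-(K * (1 + (ρ' / L) * (Real.exp t - 1) ^ q)))) *
              max 0 (1 - (c₂ / L) * (Real.exp t - 1) ^ q))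
          (Set.Ioc_disjoint_Ioi le_rfl) measurableSet_Ioi hi1 hi2
        rw [Set.Ioc_union_Ioi_eq_Ioi hT0] at hunion
        have hzero : (∫ t in Set.Ioi T,
            (1 - Real.exp (-(K * (1 + (ρ' / L) * (Real.exp t - 1) ^ q)))) *
              max 0 (1 - (c₂ / L) * (Real.exp t - 1) ^ q)) = 0 :=
          setIntegral_eq_zero_of_forall_eq_zero
            (fun t ht => aux_zero K ρ' c₂ L p q hc₂ hL0 hq.le hpq (le_of_lt ht))
        simp only [hunion, hzero, add_zero]
      -- compare with the explicit majorant on (0, T]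
      have hmaj : (∫ t in Set.Ioc (0:ℝ) T,
          (1 - Real.exp (-(K * (1 + (ρ' / L) * (Real.exp t - 1) ^ q)))) *
            max 0 (1 - (c₂ / L) * (Real.exp t - 1) ^ q)) ≤
          ∫ t in Set.Ioc (0:ℝ) T,
            ((1 - Real.exp (-K)) + (K * ρ' / L) * Real.exp (q * t)) := by
        refine setIntegral_mono_on (hint2.mono_set Set.Ioc_subset_Ioi_self)
          ((continuous_const.add (continuous_const.mul
            (Real.continuous_exp.comp (continuous_const.mul continuous_id)))).integrableOn_Ioc)
          measurableSet_Ioc fun t ht => ?_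
        obtain ⟨ht0, _⟩ := ht
        have hx := hxnn t ht0
        set y := (ρ' / L) * (Real.exp t - 1) ^ q with hy
        have hynn : 0 ≤ y := by positivity
        have hAB : (1 - Real.exp (-(K * (1 + y)))) *
            max 0 (1 - (c₂ / L) * (Real.exp t - 1) ^ q) ≤ 1 - Real.exp (-(K * (1 + y))) := by
          have hBle : max 0 (1 - (c₂ / L) * (Real.exp t - 1) ^ q) ≤ 1 := by
            apply max_le (by norm_num)
            have : 0 ≤ (c₂ / L) * (Real.exp t - 1) ^ q := by positivity
            linarith
          have hAnn : 0 ≤ 1 - Real.exp (-(K * (1 + y))) := by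
            have : Real.exp (-(K * (1 + y))) ≤ 1 := Real.exp_le_one_iff.2 (by nlinarith)
            linarith
          exact mul_le_of_le_one_right hAnn hBle
        have hAle : 1 - Real.exp (-(K * (1 + y))) ≤ (1 - Real.exp (-K)) + K * y := by
          have hsplitexp : Real.exp (-(K * (1 + y))) =
              Real.exp (-K) * Real.exp (-(K * y)) := by
            rw [← Real.exp_add]; ring_nf
          have h1 : 1 - Real.exp (-(K * y)) ≤ K * y := by
            have := Real.add_one_le_exp (-(K * y))
            linarith
          have h2 : Real.exp (-(K * y)) ≤ 1 := Real.exp_le_one_iff.2 (by nlinarith)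
          have h3 : Real.exp (-K) ≤ 1 := Real.exp_le_one_iff.2 (by linarith)
          have h4 : 0 < Real.exp (-K) := Real.exp_pos _
          rw [hsplitexp]
          nlinarith
        have hyle : K * y ≤ (K * ρ' / L) * Real.exp (q * t) := by
          have hxe : (Real.exp t - 1) ^ q ≤ Real.exp (q * t) := by
            have h1 : (Real.exp t - 1) ^ q ≤ (Real.exp t) ^ q :=
              Real.rpow_le_rpow (by nlinarith [Real.one_le_exp ht0.le]) (by linarith) hq.le
            rwa [Real.rpow_def_of_pos (Real.exp_pos t), Real.log_exp, mul_comm t q] at h1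
          calc K * y = (K * ρ' / L) * (Real.exp t - 1) ^ q := by rw [hy]; ring
            _ ≤ (K * ρ' / L) * Real.exp (q * t) := by
                apply mul_le_mul_of_nonneg_left hxe (by positivity)
        linarith [hAB, hAle, hyle]
      -- compute the majorant integral
      have hcomp : (∫ t in Set.Ioc (0:ℝ) T,
            ((1 - Real.exp (-K)) + (K * ρ' / L) * Real.exp (q * t))) =
          (1 - Real.exp (-K)) * T + (K * ρ' / L) * (1 / q) * (Real.exp (q * T) - 1) := by
        rw [← intervalIntegral.integral_of_le hT0]
        have hderiv : ∀ t ∈ Set.uIcc (0:ℝ) T, HasDerivAt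
            (fun s => (1 - Real.exp (-K)) * s + (K * ρ' / L) * (1 / q) * Real.exp (q * s))
            ((1 - Real.exp (-K)) + (K * ρ' / L) * Real.exp (q * t)) t := by
          intro t _
          have h1 : HasDerivAt (fun s : ℝ => (1 - Real.exp (-K)) * s)
              (1 - Real.exp (-K)) t := by
            simpa using (hasDerivAt_id t).const_mul (1 - Real.exp (-K))
          have h2 : HasDerivAt (fun s : ℝ => Real.exp (q * s)) (Real.exp (q * t) * q) t := by
            simpa using ((hasDerivAt_id t).const_mul q).exp
          have h3 := h2.const_mul ((K * ρ' / L) * (1 / q))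
          have h4 := h1.add h3
          exact h4.congr_deriv (by
            rw [mul_comm (rexp (q * t)) q, ← mul_assoc, mul_assoc (K * ρ' / L),
              one_div_mul_cancel hq.ne', mul_one])
        rw [intervalIntegral.integral_eq_sub_of_hasDerivAt hderiv
          (((continuous_const.add (continuous_const.mul
            (Real.continuous_exp.comp (continuous_const.mul continuous_id))))).intervalIntegrable 0 T)]
        simp [Real.exp_zero]
        ring
      -- bound the second term
      have hexpT : Real.exp (q * T) ≤ 2 ^ q * (L / c₂) := by
        have h1 : Real.exp (q * T) = (1 + (L / c₂) ^ p) ^ q := by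
          rw [hTdef, Real.rpow_def_of_pos (by linarith : (0:ℝ) < 1 + (L / c₂) ^ p),
            mul_comm]
        have hge1 : (1:ℝ) ≤ (L / c₂) ^ p :=
          Real.one_le_rpow ((one_le_div hc₂).2 hLc₂) hp0.le
        have h2 : (1 + (L / c₂) ^ p : ℝ) ≤ 2 * (L / c₂) ^ p := by linarith
        have h3 : ((1 + (L / c₂) ^ p : ℝ)) ^ q ≤ (2 * (L / c₂) ^ p) ^ q :=
          Real.rpow_le_rpow (by linarith) h2 hq.le
        have h4 : ((2 : ℝ) * (L / c₂) ^ p) ^ q = 2 ^ q * (L / c₂) := by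
          rw [Real.mul_rpow (by norm_num) hdp.le, ← Real.rpow_mul hdpos.le, hpq,
            Real.rpow_one]
        rw [h1]
        rw [h4] at h3
        exact h3
      have hterm : (K * ρ' / L) * (1 / q) * (Real.exp (q * T) - 1) ≤ C₀ := by
        have hcoef : 0 ≤ (K * ρ' / L) * (1 / q) := by positivity
        have h1 : (K * ρ' / L) * (1 / q) * (Real.exp (q * T) - 1)
            ≤ (K * ρ' / L) * (1 / q) * (2 ^ q * (L / c₂)) := by
          apply mul_le_mul_of_nonneg_left _ hcoef
          have := Real.exp_pos (q * T)
          linarith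
        have h2 : (K * ρ' / L) * (1 / q) * (2 ^ q * (L / c₂)) = C₀ := by
          rw [hC₀]
          have hqp : (1 : ℝ) / q = p := by
            field_simp
            linarith [hpq, mul_comm p q]
          rw [hqp]
          field_simp
        linarith
      calc γ L ≤ _ := hupp
        _ = _ := hsplit
        _ ≤ _ := hmaj
        _ = (1 - Real.exp (-K)) * T + (K * ρ' / L) * (1 / q) * (Real.exp (q * T) - 1) := hcomp
        _ ≤ u L := by rw [hu]; linarith
  -- final squeeze
  refine tendsto_of_tendsto_of_tendsto_of_le_of_le' hlb_lim hub_lim ?_ ?_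
  · filter_upwards [key, eventually_ge_atTop (Real.exp 1)] with L hk hLe
    have hlogpos : 0 < Real.log L := by
      have h1 : (1:ℝ) ≤ Real.log L := by
        have := Real.log_le_log (Real.exp_pos 1) hLe
        simpa using this
      linarith
    exact (div_le_div_iff_of_pos_right hlogpos).2 hk.1
  · filter_upwards [key, eventually_ge_atTop (Real.exp 1)] with L hk hLe
    have hlogpos : 0 < Real.log L := by
      have h1 : (1:ℝ) ≤ Real.log L := by
        have := Real.log_le_log (Real.exp_pos 1) hLe
        simpa using this
      linarith
    exact (div_le_div_iff_of_pos_right hlogpos).2 hk.2
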